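/- For all a, b, c, d ∈ ℕ and every positive integer n, the identity f_{a,b,c,d}(t,q) − f_{a+n,b,c,d}(t,q) = Σ_{k=0}^{n−1} f_{a+8+k, b+3, a+c+4+k, d+4}(t,q) holds in ℂ[[t,q]]. -/
import Mathlib

/-- The q-Pochhammer symbol `(q)_k = ∏_{j=1}^k (1 - q^j)` in `ℂ[[q]]`. -/
noncomputable def qPoch (k : ℕ) : PowerSeries ℂ :=
  ∏ j ∈ Finset.range k, (1 - (PowerSeries.X : PowerSeries ℂ) ^ (j + 1))

/-- The series `f_{a,b,c,d}(t,q) ∈ ℂ[[t,q]]`, viewed as an element of `ℂ[[q]][[t]]`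
(the outer variable is `t`, the inner variable is `q`).  The coefficient of `t^m`
is the (finite) sum over the pairs `(k₁, k₂)` with `4k₁ + 2k₂ + d = m` of
`q^{4k₁² + 3k₁k₂ + k₂² + ak₁ + bk₂ + c} / ((q)_{k₁} (q)_{k₂})`. -/
noncomputable def fS (a b c d : ℕ) : PowerSeries (PowerSeries ℂ) :=
  PowerSeries.mk fun m =>
    ∑ k ∈ (Finset.range (m + 1) ×ˢ Finset.range (m + 1)).filter
        (fun k : ℕ × ℕ => 4 * k.1 + 2 * k.2 + d = m),
      (PowerSeries.X : PowerSeries ℂ) ^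
          (4 * k.1 ^ 2 + 3 * k.1 * k.2 + k.2 ^ 2 + a * k.1 + b * k.2 + c) *
        (qPoch k.1 * qPoch k.2)⁻¹

lemma term_eq (j k2 E : ℕ) :
    (PowerSeries.X : PowerSeries ℂ) ^ E * (1 - PowerSeries.X ^ (j + 1)) *
      (qPoch (j + 1) * qPoch k2)⁻¹ =
    (PowerSeries.X : PowerSeries ℂ) ^ E * (qPoch j * qPoch k2)⁻¹ := by
  have h1 : qPoch (j + 1) = qPoch j * (1 - PowerSeries.X ^ (j + 1)) := by
    rw [qPoch, Finset.prod_range_succ]; rfl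
  rw [h1]
  have h2 : qPoch j * (1 - PowerSeries.X ^ (j + 1)) * qPoch k2
      = (1 - PowerSeries.X ^ (j + 1)) * (qPoch j * qPoch k2) := by ring
  rw [h2, PowerSeries.mul_inv_rev]
  have h3 : (1 - (PowerSeries.X : PowerSeries ℂ) ^ (j + 1)) *
      (1 - PowerSeries.X ^ (j + 1))⁻¹ = 1 :=
    PowerSeries.mul_inv_cancel _ (by simp)
  calc PowerSeries.X ^ E * (1 - PowerSeries.X ^ (j + 1)) *
        ((qPoch j * qPoch k2)⁻¹ * (1 - PowerSeries.X ^ (j + 1))⁻¹)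
      = PowerSeries.X ^ E * (qPoch j * qPoch k2)⁻¹ *
        ((1 - PowerSeries.X ^ (j + 1)) * (1 - PowerSeries.X ^ (j + 1))⁻¹) := by ring
    _ = _ := by rw [h3, mul_one]

lemma key (a b c d : ℕ) :
    fS a b c d - fS (a + 1) b c d = fS (a + 8) (b + 3) (a + c + 4) (d + 4) := by
  apply PowerSeries.ext
  intro m
  rw [map_sub]
  simp only [fS, PowerSeries.coeff_mk]
  rw [← Finset.sum_sub_distrib]
  have hterm : ∀ k : ℕ × ℕ,
      (PowerSeries.X : PowerSeries ℂ) ^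
          (4 * k.1 ^ 2 + 3 * k.1 * k.2 + k.2 ^ 2 + a * k.1 + b * k.2 + c) *
        (qPoch k.1 * qPoch k.2)⁻¹ -
      (PowerSeries.X : PowerSeries ℂ) ^
          (4 * k.1 ^ 2 + 3 * k.1 * k.2 + k.2 ^ 2 + (a + 1) * k.1 + b * k.2 + c) *
        (qPoch k.1 * qPoch k.2)⁻¹ =
      (PowerSeries.X : PowerSeries ℂ) ^
          (4 * k.1 ^ 2 + 3 * k.1 * k.2 + k.2 ^ 2 + a * k.1 + b * k.2 + c) *
        (1 - PowerSeries.X ^ k.1) * (qPoch k.1 * qPoch k.2)⁻¹ := by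
    intro k
    have h : (a + 1) * k.1 = a * k.1 + k.1 := by ring
    rw [h, ← sub_mul]
    congr 1
    rw [mul_sub, mul_one, pow_add]
    ring_nf
  rw [Finset.sum_congr rfl (fun k _ => hterm k)]
  rw [← Finset.sum_filter_of_ne (p := fun k : ℕ × ℕ => k.1 ≠ 0)
    (by
      intro k _ hk h0
      apply hk
      rw [h0]
      simp)]
  refine Finset.sum_nbij' (fun k : ℕ × ℕ => (k.1 - 1, k.2))
    (fun k : ℕ × ℕ => (k.1 + 1, k.2)) ?_ ?_ ?_ ?_ ?_
  · intro k hk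
    simp only [Finset.mem_filter, Finset.mem_product, Finset.mem_range] at hk ⊢
    omega
  · intro k hk
    simp only [Finset.mem_filter, Finset.mem_product, Finset.mem_range] at hk ⊢
    omega
  · intro k hk
    simp only [Finset.mem_filter, Finset.mem_product, Finset.mem_range] at hk
    have : k.1 - 1 + 1 = k.1 := by omega
    simp [this]
  · intro k hk
    simp
  · intro k hk
    simp only [Finset.mem_filter, Finset.mem_product, Finset.mem_range] at hk
    have h1 : k.1 ≠ 0 := hk.2
    obtain ⟨j, hj⟩ : ∃ j, k.1 = j + 1 := ⟨k.1 - 1, by omega⟩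
    have hE : 4 * (j + 1) ^ 2 + 3 * (j + 1) * k.2 + k.2 ^ 2 + a * (j + 1) + b * k.2 + c
        = 4 * j ^ 2 + 3 * j * k.2 + k.2 ^ 2 + (a + 8) * j + (b + 3) * k.2 + (a + c + 4) := by
      ring
    simp only [hj, hE, Nat.add_sub_cancel]
    exact term_eq j k.2 _

theorem f_sub_left (a b c d n : ℕ) (hn : 0 < n) :
    fS a b c d - fS (a + n) b c d =
      ∑ k ∈ Finset.range n, fS (a + 8 + k) (b + 3) (a + c + 4 + k) (d + 4) := by
  clear hn
  induction n with
  | zero => simp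
  | succ n ih =>
    rw [Finset.sum_range_succ, ← ih]
    have h1 : fS (a + 8 + n) (b + 3) (a + c + 4 + n) (d + 4)
        = fS (a + n) b c d - fS (a + n + 1) b c d := by
      rw [key (a + n) b c d]
      have e1 : a + n + 8 = a + 8 + n := by omega
      have e2 : a + n + c + 4 = a + c + 4 + n := by omega
      rw [e1, e2]
    rw [h1]
    have e3 : a + (n + 1) = a + n + 1 := by omega
    rw [e3]
    ring
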